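/- (Johnson–Lindenstrauss Lemma) Let 0 < ε < 1, let x₁, …, x_n be n points in ℝ^N, and let r = ⌈8·(log n)/ε²⌉ (natural logarithm). Then there is a linear map Q : ℝ^N → ℝ^r such that for all 1 ≤ i, j ≤ n, (1−ε)·‖x_i − x_j‖² ≤ ‖Q(x_i − x_j)‖² ≤ (1+ε)·‖x_i − x_j‖². -/

import Mathlib

open MeasureTheory Real ENNReal ProbabilityTheory Set RealInnerProductSpace

namespace JLaux

/-- Product formula for lower integrals over a finite product measure. -/
theorem lintegral_pi_prod {n : ℕ} {E : Fin n → Type*} [∀ i, MeasurableSpace (E i)]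
    (μ : ∀ i, Measure (E i)) [∀ i, SigmaFinite (μ i)]
    (f : ∀ i, E i → ℝ≥0∞) (hf : ∀ i, Measurable (f i)) :
    ∫⁻ x, ∏ i, f i (x i) ∂Measure.pi μ = ∏ i, ∫⁻ x, f i x ∂μ i := by
  induction n with
  | zero => simp [lintegral_const]
  | succ n ih =>
    have h := (measurePreserving_piFinSuccAbove μ 0).symm
    have hF : Measurable fun x : ∀ i, E i => ∏ i, f i (x i) := by
      exact Finset.measurable_prod _ fun i _ => (hf i).comp (measurable_pi_apply i)
    rw [← h.lintegral_comp hF]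
    have heq : ∀ z : E 0 × (∀ i : Fin n, E ((0 : Fin (n+1)).succAbove i)),
        (∏ i, f i (((MeasurableEquiv.piFinSuccAbove E 0).symm z) i))
          = f 0 z.1 * ∏ i : Fin n, f (Fin.succ i) (z.2 i) := by
      intro z
      rw [Fin.prod_univ_succ]
      simp [MeasurableEquiv.piFinSuccAbove, Fin.insertNthEquiv, Fin.insertNth_zero, Fin.zero_succAbove, Fin.cons_zero, Fin.cons_succ]
      rfl
    calc ∫⁻ z, (∏ i, f i (((MeasurableEquiv.piFinSuccAbove E 0).symm z) i))
          ∂(μ 0).prod (Measure.pi fun i : Fin n => μ ((0:Fin (n+1)).succAbove i))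
        = ∫⁻ z, f 0 z.1 * ∏ i : Fin n, f (Fin.succ i) (z.2 i)
          ∂(μ 0).prod (Measure.pi fun i : Fin n => μ ((0:Fin (n+1)).succAbove i)) := by
          simp_rw [heq]
      _ = (∫⁻ x, f 0 x ∂μ 0) * ∫⁻ y, ∏ i : Fin n, f (Fin.succ i) (y i)
            ∂(Measure.pi fun i : Fin n => μ ((0:Fin (n+1)).succAbove i)) := by
          exact lintegral_prod_mul (hf 0).aemeasurable
            (Finset.measurable_prod _ fun i _ =>
              (hf _).comp (measurable_pi_apply i)).aemeasurable
      _ = ∏ i, ∫⁻ x, f i x ∂μ i := by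
          rw [ih (fun i => μ ((0:Fin (n+1)).succAbove i)) (fun i => f (Fin.succ i))
            (fun i => hf _), Fin.prod_univ_succ]
          simp [Fin.zero_succAbove]
          rfl


/-- The standard Gaussian measure on `ℝ^N` (as a pi type). -/
noncomputable def stdG (N : ℕ) : Measure (Fin N → ℝ) :=
  Measure.pi fun _ => gaussianReal 0 1

instance (N : ℕ) : IsProbabilityMeasure (stdG N) := by
  unfold stdG; infer_instance

theorem stdG_eq_withDensity (N : ℕ) :
    stdG N = (volume : Measure (Fin N → ℝ)).withDensity
      (fun x => ∏ j, gaussianPDF 0 1 (x j)) := by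
  refine Measure.pi_eq fun s hs => ?_
  rw [withDensity_apply _ (MeasurableSet.univ_pi hs)]
  rw [← lintegral_indicator (MeasurableSet.univ_pi hs)]
  have h1 : (univ.pi s).indicator (fun x : Fin N → ℝ => ∏ j, gaussianPDF 0 1 (x j))
      = fun x => ∏ j, (s j).indicator (gaussianPDF 0 1) (x j) := by
    ext x
    by_cases hx : x ∈ univ.pi s
    · rw [indicator_of_mem hx]
      exact Finset.prod_congr rfl fun j _ => by
        rw [indicator_of_mem (hx j (Set.mem_univ j))]
    · rw [indicator_of_notMem hx]
      obtain ⟨j, hj⟩ := not_forall.mp fun h => hx fun j _ => h j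
      exact (Finset.prod_eq_zero (Finset.mem_univ j)
        (by rw [indicator_of_notMem hj])).symm
  rw [h1, volume_pi, lintegral_pi_prod _ _
    (fun j => (measurable_gaussianPDF 0 1).indicator (hs j))]
  exact Finset.prod_congr rfl fun j _ => by
    rw [lintegral_indicator (hs j), ← gaussianReal_apply 0 one_ne_zero (s j)]

/-- Mapping a `withDensity` measure through a measurable equivalence. -/
theorem map_withDensity_equiv {X : Type*} [MeasurableSpace X] (φ : X ≃ᵐ X)
    (μ : Measure X) (G : X → ℝ≥0∞) (hG : Measurable G) :
    Measure.map φ (μ.withDensity (G ∘ φ)) = (Measure.map φ μ).withDensity G := by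
  ext s hs
  rw [Measure.map_apply φ.measurable hs, withDensity_apply _ (φ.measurable hs),
    withDensity_apply _ hs, setLIntegral_map hs hG φ.measurable]
  rfl

theorem sum_sq_eq_norm_sq {N : ℕ} (w : EuclideanSpace ℝ (Fin N)) :
    ∑ j, (w j)^2 = ‖w‖^2 := by
  rw [EuclideanSpace.norm_eq, sq_sqrt (by positivity)]
  exact Finset.sum_congr rfl fun j _ => by rw [Real.norm_eq_abs, sq_abs]


section rotation

variable {N : ℕ}

noncomputable abbrev me (N : ℕ) := (MeasurableEquiv.toLp 2 (Fin N → ℝ)).symm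

/-- The conjugation of a linear isometry of Euclidean space to the pi type. -/
noncomputable def rotEquiv (R : EuclideanSpace ℝ (Fin N) ≃ₗᵢ[ℝ] EuclideanSpace ℝ (Fin N)) :
    (Fin N → ℝ) ≃ᵐ (Fin N → ℝ) :=
  ((me N).symm.trans R.toHomeomorph.toMeasurableEquiv).trans (me N)

lemma rotEquiv_apply (R : EuclideanSpace ℝ (Fin N) ≃ₗᵢ[ℝ] EuclideanSpace ℝ (Fin N))
    (x : Fin N → ℝ) (j : Fin N) : rotEquiv R x j = R ((me N).symm x) j := rfl

lemma gaussian_density_eq (x : Fin N → ℝ) :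
    (∏ j, gaussianPDF 0 1 (x j)) =
      ENNReal.ofReal ((Real.sqrt (2*π))⁻¹ ^ N * Real.exp (-(∑ j, (x j)^2)/2)) := by
  simp only [gaussianPDF]
  rw [← ENNReal.ofReal_prod_of_nonneg (fun j _ => gaussianPDFReal_nonneg 0 1 (x j))]
  congr 1
  have : ∀ j : Fin N, gaussianPDFReal 0 1 (x j)
      = (Real.sqrt (2*π))⁻¹ * Real.exp (-(x j)^2/2) := by
    intro j
    simp [gaussianPDFReal]
  rw [Finset.prod_congr rfl fun j _ => this j, Finset.prod_mul_distrib,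
    Finset.prod_const, ← Real.exp_sum, Finset.card_univ, Fintype.card_fin,
    show (∑ j, -(x j)^2/2) = (-(∑ j, (x j)^2))/2 by
      rw [← Finset.sum_div, ← Finset.sum_neg_distrib]]

theorem stdG_map_rot (R : EuclideanSpace ℝ (Fin N) ≃ₗᵢ[ℝ] EuclideanSpace ℝ (Fin N)) :
    Measure.map (rotEquiv R) (stdG N) = stdG N := by
  have hmp : MeasurePreserving (rotEquiv R) (volume : Measure (Fin N → ℝ)) volume :=
    ((EuclideanSpace.volume_preserving_symm_measurableEquiv_toLp (Fin N)).comp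
      ((R.measurePreserving).comp
        ((EuclideanSpace.volume_preserving_symm_measurableEquiv_toLp (Fin N)).symm)))
  have hGmeas : Measurable (fun x : Fin N → ℝ => ∏ j, gaussianPDF 0 1 (x j)) :=
    Finset.measurable_prod _ fun j _ => (measurable_gaussianPDF 0 1).comp (measurable_pi_apply j)
  have hGinv : (fun x : Fin N → ℝ => ∏ j, gaussianPDF 0 1 (x j)) ∘ (rotEquiv R)
      = (fun x : Fin N → ℝ => ∏ j, gaussianPDF 0 1 (x j)) := by
    funext x
    simp only [Function.comp_apply]
    rw [gaussian_density_eq, gaussian_density_eq]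
    have h1 : ∑ j, (rotEquiv R x j)^2 = ∑ j, (x j)^2 := by
      have h2 : ∑ j, (rotEquiv R x j)^2 = ‖R ((me N).symm x)‖^2 := by
        rw [← sum_sq_eq_norm_sq]
        rfl
      rw [h2, R.norm_map, ← sum_sq_eq_norm_sq]
      rfl
    rw [h1]
  calc Measure.map (rotEquiv R) (stdG N)
      = Measure.map (rotEquiv R) (volume.withDensity
          ((fun x : Fin N → ℝ => ∏ j, gaussianPDF 0 1 (x j)) ∘ (rotEquiv R))) := by
        rw [hGinv, ← stdG_eq_withDensity]
    _ = (Measure.map (rotEquiv R) volume).withDensity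
          (fun x : Fin N → ℝ => ∏ j, gaussianPDF 0 1 (x j)) :=
        map_withDensity_equiv (rotEquiv R) volume _ hGmeas
    _ = stdG N := by rw [hmp.map_eq, ← stdG_eq_withDensity]

theorem stdG_map_eval (i : Fin N) :
    Measure.map (fun x : Fin N → ℝ => x i) (stdG N) = gaussianReal 0 1 := by
  ext s hs
  rw [Measure.map_apply (measurable_pi_apply i) hs]
  have : (fun x : Fin N → ℝ => x i) ⁻¹' s = univ.pi (Function.update (fun _ => univ) i s) :=
    Set.eval_preimage
  rw [this, stdG, Measure.pi_pi]
  rw [Finset.prod_eq_single i (fun j _ hj => by rw [Function.update_of_ne hj]; simp)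
    (fun h => absurd (Finset.mem_univ i) h)]
  rw [Function.update_self]

theorem stdG_map_linfunc (u : Fin N → ℝ) (hu : ∑ j, (u j)^2 = 1) :
    Measure.map (fun x : Fin N → ℝ => ∑ j, u j * x j) (stdG N) = gaussianReal 0 1 := by
  have hN : 0 < N := by
    by_contra h
    rw [not_lt, Nat.le_zero] at h
    subst h
    simp at hu
  set i₀ : Fin N := ⟨0, hN⟩
  set u' : EuclideanSpace ℝ (Fin N) := (me N).symm u with hu'def
  have hu'norm : ‖u'‖ = 1 := by
    have h1 : ‖u'‖^2 = 1 := by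
      rw [← sum_sq_eq_norm_sq]
      exact hu
    nlinarith [norm_nonneg u']
  set e₀ : EuclideanSpace ℝ (Fin N) := EuclideanSpace.single i₀ (1:ℝ) with he₀def
  have he₀norm : ‖e₀‖ = 1 := by rw [he₀def, EuclideanSpace.norm_single]; norm_num
  set R := Submodule.reflection (ℝ ∙ (u' - e₀))ᗮ with hRdef
  have hRu' : R u' = e₀ := Submodule.reflection_sub (by rw [hu'norm, he₀norm])
  have hg : Measurable (fun x : Fin N → ℝ => ∑ j, u j * x j) :=
    Finset.measurable_sum _ fun j _ => (measurable_pi_apply j).const_mul _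
  conv_lhs => rw [← stdG_map_rot R]
  rw [Measure.map_map hg (rotEquiv R).measurable]
  have hcomp : (fun x : Fin N → ℝ => ∑ j, u j * x j) ∘ (rotEquiv R)
      = fun x : Fin N → ℝ => x i₀ := by
    funext x
    have h1 : ∑ j, u j * (rotEquiv R x) j = ⟪u', R ((me N).symm x)⟫ := by
      rw [PiLp.inner_apply]
      refine Finset.sum_congr rfl fun j _ => ?_
      rw [rotEquiv_apply]
      simp only [RCLike.inner_apply, conj_trivial]
      exact mul_comm _ _
    show ∑ j, u j * (rotEquiv R x) j = x i₀
    rw [h1]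
    have h2 : ⟪u', R ((me N).symm x)⟫ = ⟪R u', R (R ((me N).symm x))⟫ := by
      rw [LinearIsometryEquiv.inner_map_map]
    rw [h2, hRu']
    have h3 : R (R ((me N).symm x)) = (me N).symm x := Submodule.reflection_reflection _ _
    rw [h3, he₀def]
    rw [EuclideanSpace.inner_single_left]
    simp only [conj_trivial, one_mul]
    rfl
  rw [hcomp, stdG_map_eval]

end rotation


/-- MGF of the square of a standard Gaussian. -/
theorem lintegral_exp_sq_gaussian {s : ℝ} (hs : s < 1/2) :
    ∫⁻ t, ENNReal.ofReal (Real.exp (s * t^2)) ∂(gaussianReal 0 1)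
      = ENNReal.ofReal ((Real.sqrt (1 - 2*s))⁻¹) := by
  have hb : 0 < 1/2 - s := by linarith
  rw [gaussianReal_of_var_ne_zero 0 one_ne_zero]
  rw [lintegral_withDensity_eq_lintegral_mul volume (measurable_gaussianPDF 0 1)
    (show Measurable fun t : ℝ => ENNReal.ofReal (Real.exp (s * t^2)) from
      (((measurable_id'.pow_const 2).const_mul s).exp.ennreal_ofReal))]
  have hptwise : (fun x => (gaussianPDF 0 1 * fun t => ENNReal.ofReal (Real.exp (s * t^2))) x)
      = fun x => ENNReal.ofReal ((Real.sqrt (2*π))⁻¹ * Real.exp (-(1/2 - s) * x^2)) := by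
    funext x
    simp only [Pi.mul_apply, gaussianPDF]
    rw [← ENNReal.ofReal_mul (gaussianPDFReal_nonneg 0 1 x)]
    congr 1
    have hpdf : gaussianPDFReal 0 1 x = (Real.sqrt (2*π))⁻¹ * Real.exp (-x^2/2) := by
      simp [gaussianPDFReal]
    rw [hpdf, mul_assoc, ← Real.exp_add]
    congr 2
    ring
  rw [hptwise]
  rw [← MeasureTheory.ofReal_integral_eq_lintegral_ofReal]
  · congr 1
    rw [MeasureTheory.integral_const_mul, integral_gaussian]
    have h1 : π / (1/2 - s) = 2*π * (1 - 2*s)⁻¹ := by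
      rw [div_eq_mul_inv]
      rw [show (1/2 - s) = (1 - 2*s)/2 by ring]
      rw [← div_eq_mul_inv]
      field_simp
    rw [h1, Real.sqrt_mul (by positivity : (0:ℝ) ≤ 2*π) ((1 - 2*s)⁻¹), Real.sqrt_inv]
    rw [← mul_assoc, inv_mul_cancel₀ (by positivity), one_mul]
  · exact (Integrable.const_mul (integrable_exp_neg_mul_sq hb) _)
  · filter_upwards with x
    positivity

section chernoff

variable {r N : ℕ}

/-- The random variable `‖Gu‖²` on the product Gaussian space. -/
noncomputable def Z (u : Fin N → ℝ) (ω : Fin r → Fin N → ℝ) : ℝ :=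
  ∑ i, (∑ j, u j * ω i j)^2

noncomputable def μΩ (r N : ℕ) : Measure (Fin r → Fin N → ℝ) :=
  Measure.pi fun _ => stdG N

instance (r N : ℕ) : IsProbabilityMeasure (μΩ r N) := by unfold μΩ; infer_instance

lemma measurable_L (u : Fin N → ℝ) : Measurable (fun x : Fin N → ℝ => ∑ j, u j * x j) :=
  Finset.measurable_sum _ fun j _ => (measurable_pi_apply j).const_mul _

lemma measurable_Z (u : Fin N → ℝ) : Measurable (Z (r := r) u) :=
  Finset.measurable_sum _ fun i _ =>
    (((measurable_L u).comp (measurable_pi_apply i)).pow_const 2)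

lemma measurable_expsZ (u : Fin N → ℝ) (s c : ℝ) :
    Measurable (fun ω : Fin r → Fin N → ℝ => ENNReal.ofReal (Real.exp (s * Z u ω - c))) :=
  ((((measurable_Z u).const_mul s).sub_const c).exp).ennreal_ofReal

lemma measurable_expsZ' (u : Fin N → ℝ) (s : ℝ) :
    Measurable (fun ω : Fin r → Fin N → ℝ => ENNReal.ofReal (Real.exp (s * Z u ω))) :=
  (((measurable_Z u).const_mul s).exp).ennreal_ofReal

theorem lintegral_exp_Z {s : ℝ} (hs : s < 1/2) (u : Fin N → ℝ) (hu : ∑ j, (u j)^2 = 1) :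
    ∫⁻ ω, ENNReal.ofReal (Real.exp (s * Z u ω)) ∂(μΩ r N)
      = ENNReal.ofReal ((Real.sqrt (1 - 2*s))⁻¹) ^ r := by
  have heq : (fun ω : Fin r → Fin N → ℝ => ENNReal.ofReal (Real.exp (s * Z u ω)))
      = fun ω => ∏ i, ENNReal.ofReal (Real.exp (s * (∑ j, u j * ω i j)^2)) := by
    funext ω
    rw [← ENNReal.ofReal_prod_of_nonneg (fun i _ => (Real.exp_pos _).le), ← Real.exp_sum]
    congr 2
    rw [Z, Finset.mul_sum]
  rw [heq, μΩ, lintegral_pi_prod (fun _ => stdG N)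
    (fun _ x => ENNReal.ofReal (Real.exp (s * (∑ j, u j * x j)^2)))
    (fun _ => (((measurable_L u).pow_const 2).const_mul s).exp.ennreal_ofReal)]
  have hfac : ∀ x : Fin N → ℝ, ENNReal.ofReal (Real.exp (s * (∑ j, u j * x j)^2))
      = (fun t : ℝ => ENNReal.ofReal (Real.exp (s * t^2))) ((fun x => ∑ j, u j * x j) x) := by
    intro x; rfl
  calc ∏ _i : Fin r, ∫⁻ x, ENNReal.ofReal (Real.exp (s * (∑ j, u j * x j)^2)) ∂stdG N
      = ∏ _i : Fin r, ∫⁻ t, ENNReal.ofReal (Real.exp (s * t^2)) ∂(gaussianReal 0 1) := by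
        refine Finset.prod_congr rfl fun i _ => ?_
        rw [← stdG_map_linfunc u hu, lintegral_map
          (show Measurable fun t : ℝ => ENNReal.ofReal (Real.exp (s * t^2)) from
            (((measurable_id'.pow_const 2).const_mul s).exp.ennreal_ofReal))
          (measurable_L u)]
    _ = ENNReal.ofReal ((Real.sqrt (1 - 2*s))⁻¹) ^ r := by
        rw [Finset.prod_const, lintegral_exp_sq_gaussian hs, Finset.card_univ, Fintype.card_fin]

/-- Core Chernoff bound. -/
theorem chernoff_core (u : Fin N → ℝ) (hu : ∑ j, (u j)^2 = 1) {c : ℝ} (hc : 0 < c)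
    (E : Set (Fin r → Fin N → ℝ))
    (hE : E ⊆ {ω | 1 ≤ ENNReal.ofReal
      (Real.exp ((1 - 1/c)/2 * Z u ω - (1 - 1/c)/2 * (c*r)))}) :
    μΩ r N E ≤ ENNReal.ofReal (Real.exp (-(r:ℝ)/2 * (c - 1 - Real.log c))) := by
  set s : ℝ := (1 - 1/c)/2 with hsdef
  have hs : s < 1/2 := by
    have : 0 < 1/c := by positivity
    rw [hsdef]; linarith
  have step1 : μΩ r N E ≤ ∫⁻ ω, ENNReal.ofReal (Real.exp (s * Z u ω - s * (c*r))) ∂(μΩ r N) := by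
    refine le_trans (measure_mono hE) ?_
    have := mul_meas_ge_le_lintegral₀ (μ := μΩ r N)
      (measurable_expsZ u s (s * (c*r))).aemeasurable 1
    simpa using this
  refine le_trans step1 ?_
  have step2 : ∀ ω : Fin r → Fin N → ℝ, ENNReal.ofReal (Real.exp (s * Z u ω - s * (c*r)))
      = ENNReal.ofReal (Real.exp (-(s * (c*r)))) * ENNReal.ofReal (Real.exp (s * Z u ω)) := by
    intro ω
    rw [← ENNReal.ofReal_mul (Real.exp_pos _).le, ← Real.exp_add]
    congr 2
    ring
  simp_rw [step2]
  rw [lintegral_const_mul _ (measurable_expsZ' u s)]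
  rw [lintegral_exp_Z hs u hu]
  -- now pure algebra
  have h1c : 1 - 2*s = 1/c := by rw [hsdef]; ring
  have hsc : s * c = (c-1)/2 := by
    rw [hsdef]; field_simp
  rw [h1c]
  have h2 : (Real.sqrt (1/c))⁻¹ = Real.sqrt c := by
    rw [one_div, Real.sqrt_inv, inv_inv]
  rw [h2]
  have h3 : Real.sqrt c = Real.exp (Real.log c / 2) := by
    rw [← Real.log_sqrt hc.le, Real.exp_log (Real.sqrt_pos.mpr hc)]
  rw [h3, ← ENNReal.ofReal_pow (Real.exp_pos _).le, ← Real.exp_nat_mul,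
    ← ENNReal.ofReal_mul (Real.exp_pos _).le, ← Real.exp_add]
  apply le_of_eq
  congr 1
  rw [show s * (c * r) = (r:ℝ) * ((c-1)/2) by rw [← mul_assoc, hsc]; ring]
  ring

theorem chernoff_upper (u : Fin N → ℝ) (hu : ∑ j, (u j)^2 = 1) {c : ℝ} (hc : 1 < c) :
    μΩ r N {ω | c * r ≤ Z u ω}
      ≤ ENNReal.ofReal (Real.exp (-(r:ℝ)/2 * (c - 1 - Real.log c))) := by
  refine chernoff_core u hu (by linarith) _ ?_
  intro ω hω
  simp only [Set.mem_setOf_eq] at hω ⊢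
  rw [ENNReal.one_le_ofReal]
  have hs : 0 < (1 - 1/c)/2 := by
    have h1 : 1/c < 1 := by rw [div_lt_one (by linarith)]; exact hc
    linarith
  calc (1:ℝ) = Real.exp 0 := Real.exp_zero.symm
    _ ≤ _ := by
        apply Real.exp_le_exp.mpr
        have := mul_le_mul_of_nonneg_left hω hs.le
        linarith [this]

theorem chernoff_lower (u : Fin N → ℝ) (hu : ∑ j, (u j)^2 = 1) {c : ℝ} (hc0 : 0 < c)
    (hc : c < 1) :
    μΩ r N {ω | Z u ω ≤ c * r}
      ≤ ENNReal.ofReal (Real.exp (-(r:ℝ)/2 * (c - 1 - Real.log c))) := by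
  refine chernoff_core u hu hc0 _ ?_
  intro ω hω
  simp only [Set.mem_setOf_eq] at hω ⊢
  rw [ENNReal.one_le_ofReal]
  have hs : (1 - 1/c)/2 < 0 := by
    have h1 : 1 < 1/c := by rw [lt_div_iff₀ hc0]; linarith
    linarith
  calc (1:ℝ) = Real.exp 0 := Real.exp_zero.symm
    _ ≤ _ := by
        apply Real.exp_le_exp.mpr
        have := mul_le_mul_of_nonpos_left hω hs.le
        linarith [this]

end chernoff


/-- `log(1+ε) - log(1-ε) ≥ 2ε`. -/
lemma two_mul_le_log_sub {ε : ℝ} (hε0 : 0 < ε) (hε1 : ε < 1) :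
    2*ε ≤ Real.log (1+ε) - Real.log (1-ε) := by
  set f : ℝ → ℝ := fun t => Real.log (1+t) - Real.log (1-t) - 2*t with hf
  have key : ∀ t ∈ Set.Icc (0:ℝ) ε,
      HasDerivAt f (1/(1+t) + 1/(1-t) - 2) t := by
    intro t ht
    have ht1 : (0:ℝ) < 1 + t := by cases ht; linarith
    have ht2 : (0:ℝ) < 1 - t := by cases ht; linarith
    have h1 : HasDerivAt (fun t : ℝ => Real.log (1+t)) (1/(1+t)) t := by
      have h := (((hasDerivAt_id t).const_add (1:ℝ)).log (by simpa using ht1.ne'))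
      simpa using h
    have h2 : HasDerivAt (fun t : ℝ => Real.log (1-t)) (-(1/(1-t))) t := by
      have h := (((hasDerivAt_id t).const_sub (1:ℝ)).log (by simpa using ht2.ne'))
      simp only [id] at h
      convert h using 1
      field_simp
    have h3 : HasDerivAt (fun t : ℝ => 2*t) 2 t := by
      simpa using (hasDerivAt_id t).const_mul (2:ℝ)
    have := (h1.sub h2).sub h3
    exact this.congr_deriv (by ring)
  have hmono : MonotoneOn f (Set.Icc 0 ε) := by
    apply monotoneOn_of_deriv_nonneg (convex_Icc 0 ε)
    · exact continuousOn_of_forall_continuousAt fun t ht => (key t ht).continuousAt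
    · intro t ht
      rw [interior_Icc] at ht
      exact ((key t (Set.mem_Icc_of_Ioo ht)).differentiableAt).differentiableWithinAt
    · intro t ht
      rw [interior_Icc] at ht
      rw [(key t (Set.mem_Icc_of_Ioo ht)).deriv]
      obtain ⟨ht0, htε⟩ := ht
      have ht1 : (0:ℝ) < 1 + t := by linarith
      have ht2 : (0:ℝ) < 1 - t := by linarith
      have hA : (1+t) * (1/(1+t)) = 1 := by field_simp
      have hB : (1-t) * (1/(1-t)) = 1 := by field_simp
      have hApos : 0 < 1/(1+t) := by positivity
      have hBpos : 0 < 1/(1-t) := by positivity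
      nlinarith [sq_nonneg t, mul_pos hApos hBpos]
  have h0 : f 0 ≤ f ε := hmono (Set.left_mem_Icc.mpr hε0.le)
    (Set.right_mem_Icc.mpr hε0.le) hε0.le
  have hf0 : f 0 = 0 := by simp [hf]
  rw [hf0] at h0
  simp only [hf] at h0
  linarith

section analytic

/-- The key analytic bounds for the scaled thresholds. -/
lemma analytic_facts {ε : ℝ} (hε0 : 0 < ε) (hε1 : ε < 1) (a : ℝ)
    (ha : a = (Real.log (1+ε) - Real.log (1-ε))/(2*ε)) :
    0 < a * (1-ε) ∧ a * (1-ε) < 1 ∧ 1 < a * (1+ε) ∧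
    ε^2/2 ≤ a*(1-ε) - 1 - Real.log (a*(1-ε)) ∧
    ε^2/2 ≤ a*(1+ε) - 1 - Real.log (a*(1+ε)) := by
  have h1ε : (0:ℝ) < 1 - ε := by linarith
  have h2ε : (0:ℝ) < 1 + ε := by linarith
  have hL : 2*ε ≤ Real.log (1+ε) - Real.log (1-ε) := two_mul_le_log_sub hε0 hε1
  have ha1 : 1 ≤ a := by
    rw [ha, le_div_iff₀ (by positivity)]
    linarith
  have ha0 : 0 < a := lt_of_lt_of_le one_pos ha1
  have haε : a * ε = (Real.log (1+ε) - Real.log (1-ε))/2 := by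
    rw [ha]
    field_simp
  -- log bounds
  have hlog_a : Real.log a ≤ a - 1 := Real.log_le_sub_one_of_pos ha0
  have hLsum : Real.log (1+ε) + Real.log (1-ε) = Real.log (1-ε^2) := by
    rw [← Real.log_mul (by positivity) (by positivity)]
    congr 1
    ring
  have hLsum_le : Real.log (1-ε^2) ≤ -ε^2 := by
    have := Real.log_le_sub_one_of_pos (show (0:ℝ) < 1-ε^2 by nlinarith)
    linarith
  have hfirst : 0 < a * (1-ε) := by positivity
  have hlt1 : a * (1-ε) < 1 := by
    have hp : Real.log (1+ε) ≤ ε := by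
      have := Real.log_le_sub_one_of_pos h2ε
      linarith
    have hm : -Real.log (1-ε) ≤ ε/(1-ε) := by
      have h3 := Real.log_le_sub_one_of_pos (show (0:ℝ) < (1-ε)⁻¹ by positivity)
      rw [Real.log_inv] at h3
      have h4 : (1-ε)⁻¹ - 1 = ε/(1-ε) := by field_simp; ring
      linarith
    have hb : (1-ε) * (Real.log (1+ε) - Real.log (1-ε)) < 2*ε := by
      have h5 : Real.log (1+ε) - Real.log (1-ε) ≤ ε + ε/(1-ε) := by linarith
      have h6 : (1-ε) * (Real.log (1+ε) - Real.log (1-ε)) ≤ (1-ε) * (ε + ε/(1-ε)) :=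
        mul_le_mul_of_nonneg_left h5 h1ε.le
      have h7 : (1-ε) * (ε + ε/(1-ε)) = 2*ε - ε^2 := by field_simp; ring
      nlinarith
    rw [show a * (1-ε) = (1-ε) * (Real.log (1+ε) - Real.log (1-ε)) / (2*ε) by
      rw [ha]; ring]
    rw [div_lt_one (by positivity)]
    exact hb
  have hgt1 : 1 < a * (1+ε) := by nlinarith
  have hlower : ε^2/2 ≤ a*(1-ε) - 1 - Real.log (a*(1-ε)) := by
    have hlog : Real.log (a*(1-ε)) = Real.log a + Real.log (1-ε) :=
      Real.log_mul ha0.ne' h1ε.ne'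
    rw [hlog]
    have : a*(1-ε) = a - a*ε := by ring
    rw [this, haε]
    linarith
  have hupper : ε^2/2 ≤ a*(1+ε) - 1 - Real.log (a*(1+ε)) := by
    have hlog : Real.log (a*(1+ε)) = Real.log a + Real.log (1+ε) :=
      Real.log_mul ha0.ne' h2ε.ne'
    rw [hlog]
    have : a*(1+ε) = a + a*ε := by ring
    rw [this, haε]
    linarith
  exact ⟨hfirst, hlt1, hgt1, hlower, hupper⟩

end analytic

/-- Counting: the number of strictly increasing pairs. -/
lemma card_lt_pairs (n : ℕ) :
    (Finset.univ.filter (fun p : Fin n × Fin n => p.1 < p.2)).card * 2 = n * (n-1) := by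
  have h1 : (Finset.univ.filter (fun p : Fin n × Fin n => p.1 < p.2)).card
      = ∑ j : Fin n, (Finset.Iio j).card := by
    rw [Finset.card_eq_sum_card_fiberwise
      (f := fun p : Fin n × Fin n => p.2) (t := Finset.univ) (fun p _ => Finset.mem_univ _)]
    refine Finset.sum_congr rfl fun j _ => ?_
    refine Finset.card_bij (fun p _ => p.1) ?_ ?_ ?_
    · intro p hp
      simp only [Finset.mem_filter, Finset.mem_univ, true_and] at hp
      rw [Finset.mem_Iio]
      rw [hp.2] at hp
      exact hp.1
    · intro p hp q hq hpq
      simp only [Finset.mem_filter, Finset.mem_univ, true_and] at hp hq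
      exact Prod.ext hpq (hp.2.trans hq.2.symm)
    · intro i hi
      exact ⟨(i, j), Finset.mem_filter.mpr ⟨Finset.mem_filter.mpr
        ⟨Finset.mem_univ _, Finset.mem_Iio.mp hi⟩, rfl⟩, rfl⟩
  rw [h1]
  simp only [Fin.card_Iio]
  rw [Fin.sum_univ_eq_sum_range (fun j => j) n]
  exact Finset.sum_range_id_mul_two n


end JLaux

open JLaux

set_option maxHeartbeats 1000000 in
theorem johnson_lindenstrauss (ε : ℝ) (hε0 : 0 < ε) (hε1 : ε < 1)
    (n N : ℕ) (x : Fin n → EuclideanSpace ℝ (Fin N))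
    (r : ℕ) (hr : r = ⌈8 * Real.log n / ε ^ 2⌉₊) :
    ∃ Q : EuclideanSpace ℝ (Fin N) →ₗ[ℝ] EuclideanSpace ℝ (Fin r),
      ∀ i j : Fin n,
        (1 - ε) * ‖x i - x j‖ ^ 2 ≤ ‖Q (x i - x j)‖ ^ 2 ∧
        ‖Q (x i - x j)‖ ^ 2 ≤ (1 + ε) * ‖x i - x j‖ ^ 2 := by
  classical
  by_cases hn1 : n ≤ 1
  · refine ⟨0, fun i j => ?_⟩
    have hij : i = j := by
      apply Fin.ext
      have := i.isLt; have := j.isLt; omega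
    subst hij
    constructor <;> simp [sub_self]
  push_neg at hn1
  have h1ε : (0:ℝ) < 1 - ε := by linarith
  have h2ε : (0:ℝ) < 1 + ε := by linarith
  set a : ℝ := (Real.log (1+ε) - Real.log (1-ε))/(2*ε) with ha
  obtain ⟨hα0, hα1, hβ1, hαexp, hβexp⟩ := analytic_facts hε0 hε1 a ha
  have ha0 : 0 < a := by nlinarith
  have hn0 : (0:ℝ) < n := by exact_mod_cast Nat.lt_of_lt_of_le Nat.zero_lt_one hn1.le
  have hlogn : 0 < Real.log n := Real.log_pos (by exact_mod_cast hn1)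
  have hrge : 8 * Real.log n / ε^2 ≤ (r:ℝ) := by rw [hr]; exact Nat.le_ceil _
  have hrpos : (0:ℝ) < r := lt_of_lt_of_le (by positivity) hrge
  -- numeric tail bound
  have htail : ∀ c : ℝ, ε^2/2 ≤ c - 1 - Real.log c →
      Real.exp (-(r:ℝ)/2 * (c - 1 - Real.log c)) ≤ ((n:ℝ)^2)⁻¹ := by
    intro c hc
    have h2L : 2 * Real.log n ≤ (r:ℝ)/2 * (c - 1 - Real.log c) := by
      have hstep : 8 * Real.log n / ε^2 * (ε^2/2) ≤ (r:ℝ) * (c - 1 - Real.log c) :=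
        mul_le_mul hrge hc (by positivity) hrpos.le
      have heq : 8 * Real.log n / ε^2 * (ε^2/2) = 4 * Real.log n := by
        field_simp
        ring
      rw [heq] at hstep
      linarith
    have hmon : Real.exp (-(r:ℝ)/2 * (c - 1 - Real.log c)) ≤ Real.exp (-(2*Real.log n)) := by
      apply Real.exp_le_exp.mpr
      have : -(r:ℝ)/2 * (c - 1 - Real.log c) = -((r:ℝ)/2 * (c - 1 - Real.log c)) := by ring
      rw [this]
      linarith
    have hval : Real.exp (-(2*Real.log n)) = ((n:ℝ)^2)⁻¹ := by
      rw [Real.exp_neg]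
      congr 1
      rw [two_mul, Real.exp_add, Real.exp_log hn0, sq]
    rw [hval] at hmon
    exact hmon
  -- unit vectors
  have huvec : ∀ v : EuclideanSpace ℝ (Fin N), v ≠ 0 →
      ∑ j, (‖v‖⁻¹ * v j)^2 = 1 := by
    intro v hv
    have hvn : ‖v‖ ≠ 0 := norm_ne_zero_iff.mpr hv
    have : ∀ j, (‖v‖⁻¹ * v j)^2 = ‖v‖⁻¹^2 * (v j)^2 := fun j => by ring
    rw [Finset.sum_congr rfl fun j _ => this j, ← Finset.mul_sum, sum_sq_eq_norm_sq]
    field_simp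
  -- bad events
  set bad : Fin n × Fin n → Set (Fin r → Fin N → ℝ) := fun p =>
    if x p.1 - x p.2 = 0 then ∅ else
      {ω | Z (fun j => ‖x p.1 - x p.2‖⁻¹ * (x p.1 - x p.2) j) ω ≤ (a*(1-ε)) * r}
      ∪ {ω | (a*(1+ε)) * r ≤ Z (fun j => ‖x p.1 - x p.2‖⁻¹ * (x p.1 - x p.2) j) ω} with hbaddef
  have hbad : ∀ p, μΩ r N (bad p) ≤ ENNReal.ofReal (((n:ℝ)^2)⁻¹ + ((n:ℝ)^2)⁻¹) := by
    intro p
    rw [hbaddef]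
    by_cases hv : x p.1 - x p.2 = 0
    · simp [hv]
    · simp only [if_neg hv]
      refine le_trans (measure_union_le _ _) ?_
      rw [ENNReal.ofReal_add (by positivity) (by positivity)]
      have h1 := chernoff_lower (r := r) (fun j => ‖x p.1 - x p.2‖⁻¹ * (x p.1 - x p.2) j)
        (huvec _ hv) hα0 hα1
      have h2 := chernoff_upper (r := r) (fun j => ‖x p.1 - x p.2‖⁻¹ * (x p.1 - x p.2) j)
        (huvec _ hv) hβ1
      exact add_le_add
        (le_trans h1 (ENNReal.ofReal_le_ofReal (htail _ hαexp)))
        (le_trans h2 (ENNReal.ofReal_le_ofReal (htail _ hβexp)))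
  set P : Finset (Fin n × Fin n) := Finset.univ.filter (fun p => p.1 < p.2) with hP
  have hUnion : μΩ r N (⋃ p ∈ P, bad p) < 1 := by
    have hcard : (P.card : ℝ) * 2 = (n:ℝ) * ((n:ℝ) - 1) := by
      have h := card_lt_pairs n
      rw [hP]
      have : ((n * (n-1) : ℕ) : ℝ) = (n:ℝ) * ((n:ℝ) - 1) := by
        push_cast [Nat.cast_sub (le_of_lt hn1)]
        ring
      rw [← this, ← h]
      push_cast
      ring
    calc μΩ r N (⋃ p ∈ P, bad p) ≤ ∑ p ∈ P, μΩ r N (bad p) :=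
          measure_biUnion_finset_le P bad
      _ ≤ ∑ _p ∈ P, ENNReal.ofReal (((n:ℝ)^2)⁻¹ + ((n:ℝ)^2)⁻¹) :=
          Finset.sum_le_sum fun p _ => hbad p
      _ = P.card * ENNReal.ofReal (((n:ℝ)^2)⁻¹ + ((n:ℝ)^2)⁻¹) := by
          rw [Finset.sum_const, nsmul_eq_mul]
      _ = ENNReal.ofReal (P.card * (((n:ℝ)^2)⁻¹ + ((n:ℝ)^2)⁻¹)) := by
          rw [ENNReal.ofReal_mul (by positivity), ENNReal.ofReal_natCast]
      _ < 1 := by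
          rw [← ENNReal.ofReal_one, ENNReal.ofReal_lt_ofReal_iff one_pos]
          have hcalc : (P.card : ℝ) * (((n:ℝ)^2)⁻¹ + ((n:ℝ)^2)⁻¹) = ((n:ℝ) - 1) / n := by
            have hn2 : ((n:ℝ)^2) ≠ 0 := by positivity
            field_simp
            nlinarith [hcard]
          rw [hcalc, div_lt_one hn0]
          linarith
  have hexist : ∃ ω, ω ∉ ⋃ p ∈ P, bad p := by
    by_contra h
    push_neg at h
    have huniv : (⋃ p ∈ P, bad p) = Set.univ := Set.eq_univ_of_forall h
    rw [huniv, measure_univ] at hUnion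
    exact lt_irrefl _ hUnion
  obtain ⟨ω, hω⟩ := hexist
  have har : 0 < a * r := by positivity
  set c0 : ℝ := (Real.sqrt (a * r))⁻¹ with hc0
  have hc0sq : c0^2 = (a*r)⁻¹ := by
    rw [hc0, inv_pow, Real.sq_sqrt har.le]
  -- the linear map
  set Qfun : EuclideanSpace ℝ (Fin N) → EuclideanSpace ℝ (Fin r) :=
    fun v => WithLp.toLp 2 (fun i => c0 * ∑ j, ω i j * v j) with hQfun
  have hadd : ∀ v w, Qfun (v + w) = Qfun v + Qfun w := by
    intro v w
    ext i
    show c0 * ∑ j, ω i j * (v + w) j = (Qfun v + Qfun w) i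
    have h1 : (Qfun v + Qfun w) i = Qfun v i + Qfun w i := rfl
    rw [h1]
    show _ = c0 * ∑ j, ω i j * v j + c0 * ∑ j, ω i j * w j
    have h2 : ∀ j : Fin N, (v + w) j = v j + w j := fun j => rfl
    rw [Finset.sum_congr rfl fun j _ => by rw [h2 j, mul_add]]
    rw [Finset.sum_add_distrib]
    ring
  have hsmul : ∀ (c : ℝ) v, Qfun (c • v) = c • Qfun v := by
    intro c v
    ext i
    show c0 * ∑ j, ω i j * (c • v) j = (c • Qfun v) i
    have h1 : (c • Qfun v) i = c * Qfun v i := rfl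
    rw [h1]
    show _ = c * (c0 * ∑ j, ω i j * v j)
    have h2 : ∀ j : Fin N, ω i j * (c • v) j = c * (ω i j * v j) := fun j => by
      show ω i j * (c * v j) = _
      ring
    rw [Finset.sum_congr rfl fun j _ => h2 j, ← Finset.mul_sum]
    ring
  refine ⟨{ toFun := Qfun, map_add' := hadd, map_smul' := hsmul }, ?_⟩
  have hQnorm : ∀ v : EuclideanSpace ℝ (Fin N),
      ‖Qfun v‖^2 = c0^2 * ∑ i, (∑ j, ω i j * v j)^2 := by
    intro v
    rw [← sum_sq_eq_norm_sq (Qfun v), Finset.mul_sum]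
    refine Finset.sum_congr rfl fun i _ => ?_
    show (c0 * ∑ j, ω i j * v j)^2 = _
    ring
  have hQ0 : Qfun 0 = 0 := by simpa using hsmul 0 0
  have hgood : ∀ p : Fin n × Fin n, p ∈ P →
      (1-ε) * ‖x p.1 - x p.2‖^2 ≤ ‖Qfun (x p.1 - x p.2)‖^2 ∧
      ‖Qfun (x p.1 - x p.2)‖^2 ≤ (1+ε) * ‖x p.1 - x p.2‖^2 := by
    intro p hp
    by_cases hv : x p.1 - x p.2 = 0
    · rw [hv, hQ0]
      constructor <;> simp
    · have hvn : (0:ℝ) < ‖x p.1 - x p.2‖ := norm_pos_iff.mpr hv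
      have hωp : ω ∉ bad p := fun hmem => hω (Set.mem_biUnion hp hmem)
      rw [hbaddef] at hωp
      simp only [if_neg hv] at hωp
      rw [Set.mem_union, not_or] at hωp
      obtain ⟨hlow, hup⟩ := hωp
      simp only [Set.mem_setOf_eq, not_le] at hlow hup
      set v := x p.1 - x p.2 with hvdef
      have hZv : ∑ i, (∑ j, ω i j * v j)^2
          = ‖v‖^2 * Z (fun j => ‖v‖⁻¹ * v j) ω := by
        unfold Z
        rw [Finset.mul_sum]
        refine Finset.sum_congr rfl fun i _ => ?_
        have h3 : ∑ j, (‖v‖⁻¹ * v j) * ω i j = ‖v‖⁻¹ * ∑ j, ω i j * v j := by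
          rw [Finset.mul_sum]
          exact Finset.sum_congr rfl fun j _ => by ring
        rw [h3, mul_pow]
        field_simp
      rw [hQnorm, hZv, hc0sq]
      constructor
      · have key : (a*(r:ℝ))⁻¹ * (‖v‖^2 * ((a*(1-ε))*r)) = ((a*(r:ℝ)) * (a*(r:ℝ))⁻¹) * ((1-ε) * ‖v‖^2) := by
          ring
        rw [show (1-ε) * ‖v‖^2 = ((a*(r:ℝ)) * (a*(r:ℝ))⁻¹) * ((1-ε) * ‖v‖^2) by
          rw [mul_inv_cancel₀ har.ne', one_mul], ← key]
        apply mul_le_mul_of_nonneg_left _ (by positivity)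
        apply mul_le_mul_of_nonneg_left hlow.le (by positivity)
      · have key : (a*(r:ℝ))⁻¹ * (‖v‖^2 * ((a*(1+ε))*r)) = ((a*(r:ℝ)) * (a*(r:ℝ))⁻¹) * ((1+ε) * ‖v‖^2) := by
          ring
        rw [show (1+ε) * ‖v‖^2 = ((a*(r:ℝ)) * (a*(r:ℝ))⁻¹) * ((1+ε) * ‖v‖^2) by
          rw [mul_inv_cancel₀ har.ne', one_mul], ← key]
        apply mul_le_mul_of_nonneg_left _ (by positivity)
        apply mul_le_mul_of_nonneg_left hup.le (by positivity)
  intro i j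
  show (1-ε) * ‖x i - x j‖^2 ≤ ‖Qfun (x i - x j)‖^2 ∧
    ‖Qfun (x i - x j)‖^2 ≤ (1+ε) * ‖x i - x j‖^2
  rcases lt_trichotomy i j with hij | hij | hij
  · exact hgood (i, j) (Finset.mem_filter.mpr ⟨Finset.mem_univ _, hij⟩)
  · subst hij
    rw [sub_self, hQ0]
    constructor <;> simp
  · have h := hgood (j, i) (Finset.mem_filter.mpr ⟨Finset.mem_univ _, hij⟩)
    rw [show x i - x j = -(x j - x i) from (neg_sub (x j) (x i)).symm, norm_neg]
    have hQneg : Qfun (-(x j - x i)) = -Qfun (x j - x i) := by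
      have h5 := hsmul (-1) (x j - x i)
      rw [neg_one_smul, neg_one_smul] at h5
      exact h5
    rw [hQneg, norm_neg]
    exact h
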